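/- Noncommutative Newton interpolation: Let A be a unital Banach algebra, f holomorphic on an open set U ⊂ ℂ, and a_0,...,a_n ∈ A with spec(a_j) ⊂ U for all j. With the noncommutative divided difference [a_0,...,a_j]_π f applied to a product defined by the contour integral ([a_0,...,a_j]_π f)(c_1⋯c_j) := (1/(2πi)) ∮_γ f(ζ)(ζ-a_0)^{-1} c_1 (ζ-a_1)^{-1} ⋯ c_j (ζ-a_j)^{-1} dζ, one has f(a_n) = f(a_0) + ∑_{j=1}^n ([a_0,...,a_j]_π f)((a_n - a_0)(a_n - a_1) ⋯ (a_n - a_{j-1})). -/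

import Mathlib

open Metric

variable {A : Type*} [NormedRing A] [NormedAlgebra ℂ A] [CompleteSpace A]

/-- The noncommutative divided difference paired with elements `c₁,…,cⱼ`:
`([a₀,…,aⱼ]_π f)(c₁⋯cⱼ) = (1/2πi) ∮ f(ζ)(ζ-a₀)⁻¹ c₁ (ζ-a₁)⁻¹ ⋯ cⱼ (ζ-aⱼ)⁻¹ dζ`,
the contour being the positively oriented circle of center `z₀` and radius `R`.
For `j = 0` this is the holomorphic functional calculus `f(a₀)`. -/
noncomputable def ncDivDiff (f : ℂ → ℂ) (z₀ : ℂ) (R : ℝ) {n : ℕ}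
    (a : Fin (n + 1) → A) (b : Fin n → A) : A :=
  (2 * Real.pi * Complex.I)⁻¹ •
    ∮ ζ in C(z₀, R), f ζ •
      ((List.ofFn fun j : Fin n =>
          Ring.inverse (algebraMap ℂ A ζ - a j.castSucc) * b j).prod *
        Ring.inverse (algebraMap ℂ A ζ - a (Fin.last n)))

set_option linter.unusedSectionVars false

private lemma ncNewton_key (m : ℕ) (v : ℕ → A) (hv : ∀ i ≤ m, IsUnit (v i)) :
    ∑ k ∈ Finset.range (m + 1),
      (List.ofFn fun i : Fin k => Ring.inverse (v i) * (v i - v m)).prod * Ring.inverse (v k)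
      = Ring.inverse (v m) := by
  set Q : ℕ → A := fun k => (List.ofFn fun i : Fin k => Ring.inverse (v i) * (v i - v m)).prod
    with hQdef
  have hQ : ∀ k, Q (k + 1) = Q k * (Ring.inverse (v k) * (v k - v m)) := by
    intro k
    simp only [hQdef, List.ofFn_succ', List.concat_eq_append, List.prod_append,
      List.prod_cons, List.prod_nil, mul_one, Fin.coe_castSucc, Fin.val_last]
  have hstep : ∀ k ∈ Finset.range (m + 1), Q k * Ring.inverse (v k) =
      Q k * Ring.inverse (v m) - Q (k + 1) * Ring.inverse (v m) := by
    intro k hk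
    have hk' := hv k (Nat.lt_succ_iff.mp (Finset.mem_range.mp hk))
    have hm' := hv m le_rfl
    have h1 : Ring.inverse (v k) * (v k - v m) * Ring.inverse (v m)
        = Ring.inverse (v m) - Ring.inverse (v k) := by
      rw [mul_sub, Ring.inverse_mul_cancel _ hk', sub_mul, one_mul, mul_assoc,
        Ring.mul_inverse_cancel _ hm', mul_one]
    rw [hQ, mul_assoc (Q k), h1, mul_sub]
    abel
  rw [Finset.sum_congr rfl hstep, Finset.sum_range_sub' (fun k => Q k * Ring.inverse (v m))]
  have hQ0 : Q 0 = 1 := by simp [hQdef]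
  have hQm : Q (m + 1) = 0 := by rw [hQ]; simp
  rw [hQ0, hQm, one_mul, zero_mul, sub_zero]

private lemma ncNewton_cont {k : ℕ} (s : Set ℂ) (g : Fin k → ℂ → A)
    (hg : ∀ i, ContinuousOn (g i) s) :
    ContinuousOn (fun ζ => (List.ofFn fun i => g i ζ).prod) s := by
  induction k with
  | zero => simpa using continuousOn_const
  | succ k ih =>
    simp only [List.ofFn_succ, List.prod_cons]
    exact (hg 0).mul (ih _ fun i => hg i.succ)

private lemma ncNewton_intsum {ι : Type*} (s : Finset ι) (F : ι → ℂ → A) (c : ℂ) (R : ℝ)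
    (h : ∀ i ∈ s, CircleIntegrable (F i) c R) :
    (∮ z in C(c, R), ∑ i ∈ s, F i z) = ∑ i ∈ s, ∮ z in C(c, R), F i z := by
  simp only [circleIntegral]
  simp_rw [Finset.smul_sum]
  exact intervalIntegral.integral_finset_sum (fun i hi => (h i hi).out)

/-- Noncommutative Newton interpolation formula:
`f(aₙ) = f(a₀) + ∑_{j=1}^n ([a₀,…,aⱼ]_π f)((aₙ-a₀)(aₙ-a₁)⋯(aₙ-a_{j-1}))`,
where `f(a)` denotes the holomorphic functional calculus given by the Cauchy
integral over a circle encircling the spectra of all the `aⱼ`. -/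
theorem ncNewton (n : ℕ) (U : Set ℂ) (hU : IsOpen U) (f : ℂ → ℂ)
    (hf : DifferentiableOn ℂ f U) (z₀ : ℂ) (R : ℝ) (hR : 0 < R)
    (hUc : closedBall z₀ R ⊆ U)
    (a : Fin (n + 1) → A) (hspec : ∀ j, spectrum ℂ (a j) ⊆ ball z₀ R) :
    ncDivDiff f z₀ R (fun _ : Fin 1 => a (Fin.last n)) (fun i => i.elim0) =
      ncDivDiff f z₀ R (fun _ : Fin 1 => a 0) (fun i => i.elim0) +
        ∑ j : Fin n,
          ncDivDiff f z₀ R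
            (fun i : Fin (j.1 + 2) => a (Fin.castLE (Nat.succ_le_succ j.2) i))
            (fun i : Fin (j.1 + 1) =>
              a (Fin.last n) - a (Fin.castLE (Nat.succ_le_succ j.2) (Fin.castSucc i))) := by
  have hmin : ∀ i : ℕ, min i n < n + 1 := fun i => Nat.lt_succ_of_le (min_le_right i n)
  set aN : ℕ → A := fun i => a ⟨min i n, hmin i⟩ with haN
  set G : ℕ → ℂ → A := fun k ζ => f ζ •
      ((List.ofFn fun i : Fin k =>
          Ring.inverse (algebraMap ℂ A ζ - aN i) * (aN n - aN i)).prod *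
        Ring.inverse (algebraMap ℂ A ζ - aN k)) with hG
  have hunit : ∀ ζ ∈ sphere z₀ R, ∀ i : ℕ, IsUnit (algebraMap ℂ A ζ - aN i) := by
    intro ζ hζ i
    have h1 : ζ ∉ ball z₀ R := by
      simp only [mem_ball, mem_sphere] at hζ ⊢
      rw [hζ]
      exact lt_irrefl R
    have h2 : ζ ∉ spectrum ℂ (aN i) := fun h => h1 (hspec _ h)
    exact spectrum.notMem_iff.mp h2
  have hfc : ContinuousOn f (sphere z₀ R) :=
    hf.continuousOn.mono (fun ζ hζ => hUc (sphere_subset_closedBall hζ))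
  have hres : ∀ i : ℕ,
      ContinuousOn (fun ζ => Ring.inverse (algebraMap ℂ A ζ - aN i)) (sphere z₀ R) := by
    intro i ζ hζ
    apply ContinuousAt.continuousWithinAt
    have hu := hunit ζ hζ i
    have h1 : ContinuousAt (Ring.inverse : A → A) (algebraMap ℂ A ζ - aN i) := by
      have := NormedRing.inverse_continuousAt hu.unit
      rwa [hu.unit_spec] at this
    have h2 : ContinuousAt (fun ζ : ℂ => algebraMap ℂ A ζ - aN i) ζ :=
      ((continuous_algebraMap ℂ A).sub continuous_const).continuousAt
    exact ContinuousAt.comp (g := Ring.inverse) h1 h2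
  have hGc : ∀ k, ContinuousOn (G k) (sphere z₀ R) := by
    intro k
    exact hfc.smul (((ncNewton_cont _ _
      (fun i : Fin k => (hres i).mul continuousOn_const)).mul (hres k)))
  have hGi : ∀ k, CircleIntegrable (G k) z₀ R := fun k => (hGc k).circleIntegrable hR.le
  have e1 : ∀ (j : Fin n) (i : Fin (j.1 + 1)),
      a (Fin.castLE (Nat.succ_le_succ j.2) (Fin.castSucc i)) = aN i := by
    intro j i
    rw [haN]
    congr 1
    apply Fin.ext
    have := i.2
    have := j.2
    simp only [Fin.coe_castLE, Fin.coe_castSucc]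
    omega
  have e2 : ∀ j : Fin n,
      a (Fin.castLE (Nat.succ_le_succ j.2) (Fin.last (j.1 + 1))) = aN (j.1 + 1) := by
    intro j
    rw [haN]
    congr 1
    apply Fin.ext
    have := j.2
    simp only [Fin.coe_castLE, Fin.val_last]
    omega
  have e3 : a (Fin.last n) = aN n := by
    rw [haN]; congr 1; apply Fin.ext; simp
  have e4 : a 0 = aN 0 := by
    rw [haN]; congr 1
  have hterm : ∀ j : Fin n,
      ncDivDiff f z₀ R
          (fun i : Fin (j.1 + 2) => a (Fin.castLE (Nat.succ_le_succ j.2) i))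
          (fun i : Fin (j.1 + 1) =>
            a (Fin.last n) - a (Fin.castLE (Nat.succ_le_succ j.2) (Fin.castSucc i)))
        = (2 * Real.pi * Complex.I)⁻¹ • ∮ ζ in C(z₀, R), G (j.1 + 1) ζ := by
    intro j
    rw [ncDivDiff]
    congr 1
    apply circleIntegral.integral_congr hR.le
    intro ζ _
    rw [hG]
    simp only [e1, e2, e3]
  have hterm0 :
      ncDivDiff f z₀ R (fun _ : Fin 1 => a 0) (fun i => i.elim0)
        = (2 * Real.pi * Complex.I)⁻¹ • ∮ ζ in C(z₀, R), G 0 ζ := by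
    rw [ncDivDiff]
    congr 1
  rw [hterm0, Finset.sum_congr rfl (fun j _ => hterm j), ← Finset.smul_sum, ← smul_add]
  have hsum : ((∮ ζ in C(z₀, R), G 0 ζ) + ∑ j : Fin n, ∮ ζ in C(z₀, R), G (j.1 + 1) ζ)
      = ∮ ζ in C(z₀, R), ∑ k ∈ Finset.range (n + 1), G k ζ := by
    rw [ncNewton_intsum _ _ _ _ (fun k _ => hGi k), Finset.sum_range_succ',
      Fin.sum_univ_eq_sum_range (fun k => ∮ ζ in C(z₀, R), G (k + 1) ζ), add_comm]
  rw [hsum, ncDivDiff]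
  congr 1
  apply circleIntegral.integral_congr hR.le
  intro ζ hζ
  have hkey := ncNewton_key n (fun i => algebraMap ℂ A ζ - aN i) (fun i _ => hunit ζ hζ i)
  have hsub : ∀ i : ℕ,
      (algebraMap ℂ A ζ - aN i) - (algebraMap ℂ A ζ - aN n) = aN n - aN i := fun i => by abel
  simp only [hsub] at hkey
  simp only [hG, List.ofFn_zero, List.prod_nil, one_mul, e3, ← Finset.smul_sum]
  congr 1
  exact hkey.symm
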